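/- Let a > 0 and ε = ±1. The Thaloid of the fibre segment with endpoints A₁ = (1, 1, 0, 0) and A₂ = (1, a, 0, 0) in S²×R (ε = +1) or H²×R (ε = −1) — i.e. the set of points (x, y, z) with y² + z² > 0, Q := x² + ε(y²+z²) > 0, satisfying (1/4)·log(1/Q)·log(a²/Q) + arcC(x/√Q)² = 0 — coincides with the translation sphere of radius r = (1/2)·log a centered at C = (1, √a, 0, 0): namely the set of points whose image under the fibre translation diag(1, 1/√a, 1/√a, 1/√a) satisfies the sphere equation (1/4)·(log Q')² + arcC(x'/√Q')² = r² with Q' = x'² + ε(y'²+z'²). -/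

import Mathlib

open Real

noncomputable def arcosh (x : ℝ) : ℝ := Real.log (x + Real.sqrt (x ^ 2 - 1))

noncomputable def arcC (ε x : ℝ) : ℝ := if ε = 1 then Real.arccos x else _root_.arcosh x

/-- The Thaloid of the fibre segment from `(1,1,0,0)` to `(1,a,0,0)` is the translation
sphere of radius `(1/2) log a` centred at `(1,√a,0,0)`: a point satisfies the Thaloid
equation iff its image under the fibre translation `diag(1,1/√a,1/√a,1/√a)` satisfies the
implicit sphere equation with radius `(1/2) log a`. -/
theorem thaloid_of_fibre_segment_is_sphere (ε a : ℝ)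
    (hε : ε = 1 ∨ ε = -1) (ha : 0 < a) :
    {p : ℝ × ℝ × ℝ |
        0 < p.2.1 ^ 2 + p.2.2 ^ 2 ∧
        0 < p.1 ^ 2 + ε * (p.2.1 ^ 2 + p.2.2 ^ 2) ∧
        Real.log (1 / (p.1 ^ 2 + ε * (p.2.1 ^ 2 + p.2.2 ^ 2)))
            * Real.log (a ^ 2 / (p.1 ^ 2 + ε * (p.2.1 ^ 2 + p.2.2 ^ 2))) / 4
          + arcC ε (p.1 / Real.sqrt (p.1 ^ 2 + ε * (p.2.1 ^ 2 + p.2.2 ^ 2))) ^ 2 = 0}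
      =
    {p : ℝ × ℝ × ℝ |
        0 < p.2.1 ^ 2 + p.2.2 ^ 2 ∧
        0 < p.1 ^ 2 + ε * (p.2.1 ^ 2 + p.2.2 ^ 2) ∧
        (fun x' y' z' =>
          (Real.log (x' ^ 2 + ε * (y' ^ 2 + z' ^ 2))) ^ 2 / 4
            + arcC ε (x' / Real.sqrt (x' ^ 2 + ε * (y' ^ 2 + z' ^ 2))) ^ 2
              = (Real.log a / 2) ^ 2)
          (p.1 / Real.sqrt a) (p.2.1 / Real.sqrt a) (p.2.2 / Real.sqrt a)} := by
  ext ⟨x, y, z⟩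
  simp only [Set.mem_setOf_eq]
  refine and_congr_right fun h1 => and_congr_right fun h2 => ?_
  have hsa : (0:ℝ) < Real.sqrt a := Real.sqrt_pos.mpr ha
  set Q := x ^ 2 + ε * (y ^ 2 + z ^ 2) with hQdef
  have hQ' : (x / Real.sqrt a) ^ 2 + ε * ((y / Real.sqrt a) ^ 2 + (z / Real.sqrt a) ^ 2)
      = Q / a := by
    rw [div_pow, div_pow, div_pow, Real.sq_sqrt ha.le, hQdef]
    field_simp
  rw [hQ']
  have hsQ : Real.sqrt (Q / a) = Real.sqrt Q / Real.sqrt a := Real.sqrt_div h2.le a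
  have harg : x / Real.sqrt a / Real.sqrt (Q / a) = x / Real.sqrt Q := by
    rw [hsQ]
    have hsQ0 : (0:ℝ) < Real.sqrt Q := Real.sqrt_pos.mpr h2
    field_simp
  rw [harg, Real.log_div h2.ne' ha.ne', one_div, Real.log_inv,
    Real.log_div (pow_ne_zero 2 ha.ne') h2.ne', Real.log_pow]
  constructor <;> intro h <;> linear_combination h
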